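/- Let F be a field of odd characteristic, t transcendental over F, q ≥ 3 odd prime power, k = 4 + 3(q−1). The matrix M(1,4,q,t) = [[2t², −2t^{q+1}, −2t^{2q}, t^{3q−1}], [t², −t^{q+1}, −2t^{2q}, t^{3q−1}], [0, −t^{q+1}, 0, 0], [−t², 0, 0, 0]] over F(t) is diagonalizable over an algebraic closure of F(t), because its four eigenvalues 0, 2t² − t^{q+1}, t^{k/2}, −t^{k/2} are pairwise distinct (k is even since q is odd). -/

import Mathlib

set_option maxHeartbeats 1000000


/-- Over `F(t)` with `F` of odd characteristic and `q ≥ 3` an odd prime power, the matrix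
`M(1,4,q,t)` is diagonalizable over an algebraic closure of `F(t)` (its four eigenvalues
`0`, `2t² − t^(q+1)`, `±t^(k/2)` with `k = 4+3(q−1)` are pairwise distinct). -/
theorem stmt18 {F : Type*} [Field F] (p : ℕ) (hp : p.Prime) (hpodd : Odd p) [CharP F p]
    (q r : ℕ) (hq3 : 3 ≤ q) (hqodd : Odd q)
    (p' : ℕ) (hp' : p'.Prime) (hqpow : q = p' ^ r)
    (A : Matrix (Fin 4) (Fin 4) (RatFunc F))
    (hA : A = !![2 * RatFunc.X ^ 2, -2 * RatFunc.X ^ (q + 1),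
                 -2 * RatFunc.X ^ (2 * q), RatFunc.X ^ (3 * q - 1);
                 RatFunc.X ^ 2, -RatFunc.X ^ (q + 1),
                 -2 * RatFunc.X ^ (2 * q), RatFunc.X ^ (3 * q - 1);
                 0, -RatFunc.X ^ (q + 1), 0, 0;
                 -RatFunc.X ^ 2, 0, 0, 0]) :
    ∃ P : Matrix (Fin 4) (Fin 4) (AlgebraicClosure (RatFunc F)), IsUnit P ∧
      (P⁻¹ * A.map (algebraMap (RatFunc F) (AlgebraicClosure (RatFunc F))) * P).IsDiag := by
  obtain ⟨j, hj⟩ := hqodd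
  have hj1 : 1 ≤ j := by omega
  set x : RatFunc F := RatFunc.X with hx
  set y : RatFunc F := x ^ j with hy
  -- rewrite the exponents of A in terms of y
  have h1 : x ^ (q + 1) = y ^ 2 * x ^ 2 := by
    rw [hy, ← pow_mul, ← pow_add, show j * 2 + 2 = q + 1 by omega]
  have h2 : x ^ (2 * q) = y ^ 4 * x ^ 2 := by
    rw [hy, ← pow_mul, ← pow_add, show j * 4 + 2 = 2 * q by omega]
  have h3 : x ^ (3 * q - 1) = y ^ 6 * x ^ 2 := by
    rw [hy, ← pow_mul, ← pow_add, show j * 6 + 2 = 3 * q - 1 by omega]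
  have hA2 : A = !![2 * x ^ 2, -2 * (y ^ 2 * x ^ 2), -2 * (y ^ 4 * x ^ 2), y ^ 6 * x ^ 2;
                    x ^ 2, -(y ^ 2 * x ^ 2), -2 * (y ^ 4 * x ^ 2), y ^ 6 * x ^ 2;
                    0, -(y ^ 2 * x ^ 2), 0, 0;
                    -(x ^ 2), 0, 0, 0] := by
    rw [hA, ← h1, ← h2, ← h3]
  clear hA
  -- eigenvector matrix over RatFunc F
  set P : Matrix (Fin 4) (Fin 4) (RatFunc F) :=
    !![0, -2 * (2 - y ^ 2), y ^ 6 - y ^ 5, y ^ 6 + y ^ 5;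
       0, -(2 - y ^ 2), y ^ 6 - y ^ 3, y ^ 6 + y ^ 3;
       y ^ 2, y ^ 2, y ^ 2 - y ^ 5, y ^ 2 + y ^ 5;
       2, 2, y ^ 2 - y ^ 3, y ^ 2 + y ^ 3] with hP
  set d : Fin 4 → RatFunc F :=
    ![0, x ^ 2 * (2 - y ^ 2), x ^ 2 * y ^ 3, -(x ^ 2 * y ^ 3)] with hd
  have hAP : A * P = P * Matrix.diagonal d := by
    subst hA2
    ext i k
    fin_cases i <;> fin_cases k <;>
      simp [hP, hd, Matrix.mul_apply, Fin.sum_univ_four, Matrix.diagonal] <;> ring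
  -- determinant of P is nonzero
  have h2F : (2 : F) ≠ 0 := by
    intro h
    have h2 : ((2 : ℕ) : F) = 0 := by exact_mod_cast h
    have hdvd : p ∣ 2 := (CharP.cast_eq_zero_iff F p 2).mp h2
    have : p = 2 := (Nat.prime_dvd_prime_iff_eq hp Nat.prime_two).mp hdvd
    subst this
    simp [Nat.odd_iff] at hpodd
  have hmapne : ∀ g : Polynomial F, g ≠ 0 → algebraMap (Polynomial F) (RatFunc F) g ≠ 0 :=
    fun g hg => RatFunc.algebraMap_ne_zero hg
  have hxalg : (algebraMap (Polynomial F) (RatFunc F)) Polynomial.X = x := RatFunc.algebraMap_X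
  have hfac : ∀ (n : ℕ) (c : F), 0 < n → x ^ n - algebraMap F (RatFunc F) c ≠ 0 := by
    intro n c hn
    have : x ^ n - algebraMap F (RatFunc F) c
        = algebraMap (Polynomial F) (RatFunc F) (Polynomial.X ^ n - Polynomial.C c) := by
      rw [map_sub, map_pow, hxalg, RatFunc.algebraMap_C, RatFunc.algebraMap_eq_C]
    rw [this]
    exact hmapne _ (Polynomial.X_pow_sub_C_ne_zero hn c)
  have hxne : x ≠ 0 := RatFunc.X_ne_zero
  have hyne : y ≠ 0 := pow_ne_zero _ hxne
  have h2R : (2 : RatFunc F) ≠ 0 := fun h =>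
    h2F ((algebraMap F (RatFunc F)).injective (by rw [map_ofNat, h, map_zero]))
  have hy21 : y ^ 2 - 1 ≠ 0 := by
    have : y ^ 2 - 1 = x ^ (j * 2) - algebraMap F (RatFunc F) 1 := by
      rw [hy, ← pow_mul]; simp
    rw [this]; exact hfac _ _ (by omega)
  have hy22 : y ^ 2 - 2 ≠ 0 := by
    have : y ^ 2 - 2 = x ^ (j * 2) - algebraMap F (RatFunc F) 2 := by
      rw [hy, ← pow_mul, map_ofNat]
    rw [this]; exact hfac _ _ (by omega)
  have hy44 : y ^ 4 + 4 ≠ 0 := by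
    have : y ^ 4 + 4 = x ^ (j * 4) - algebraMap F (RatFunc F) (-4) := by
      rw [hy, ← pow_mul, map_neg, sub_neg_eq_add, map_ofNat]
    rw [this]; exact hfac _ _ (by omega)
  have hdet : P.det = -2 * y ^ 5 * (y ^ 2 - 1) * (y ^ 2 - 2) * (y ^ 4 + 4) := by
    rw [hP]
    rw [Matrix.det_succ_column_zero, Fin.sum_univ_four]
    norm_num [Matrix.det_fin_three, Matrix.submatrix_apply, Fin.succAbove, Fin.lt_def,
      show ((3:Fin 4):ℕ) = 3 from rfl, show ((2:Fin 4):ℕ) = 2 from rfl,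
      show (Fin.castSucc 0 : Fin 4) = 0 from rfl, show (Fin.castSucc 1 : Fin 4) = 1 from rfl,
      show (Fin.castSucc 2 : Fin 4) = 2 from rfl,
      show (Fin.succ 0 : Fin 4) = 1 from rfl, show (Fin.succ 1 : Fin 4) = 2 from rfl,
      show (Fin.succ 2 : Fin 4) = 3 from rfl]
    simp [Matrix.vecHead, Matrix.vecTail]
    ring
  have hdetne : P.det ≠ 0 := by
    rw [hdet]
    exact mul_ne_zero (mul_ne_zero (mul_ne_zero (mul_ne_zero (neg_ne_zero.mpr h2R)
      (pow_ne_zero _ hyne)) hy21) hy22) hy44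
  -- pass to the algebraic closure
  set φ := algebraMap (RatFunc F) (AlgebraicClosure (RatFunc F)) with hφ
  have hmapdet : (P.map ⇑φ).det = φ P.det := by
    simpa using (φ.map_det P).symm
  have hdet' : IsUnit (P.map ⇑φ).det := by
    rw [hmapdet]
    exact isUnit_iff_ne_zero.mpr (by simpa using hdetne)
  refine ⟨P.map φ, ?_, ?_⟩
  · rw [Matrix.isUnit_iff_isUnit_det]
    exact hdet'
  · have hmul : (A.map φ) * (P.map φ) = (P.map φ) * Matrix.diagonal (φ ∘ d) := by
      rw [← Matrix.map_mul, hAP, Matrix.map_mul, Matrix.diagonal_map (map_zero φ)]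
      rfl
    have : (P.map φ)⁻¹ * A.map φ * P.map φ = Matrix.diagonal (φ ∘ d) := by
      rw [mul_assoc, hmul, ← mul_assoc, Matrix.nonsing_inv_mul _ hdet', one_mul]
    rw [this]
    exact Matrix.isDiag_diagonal _
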